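/- Let X be an n×n complex cross matrix with n ≥ 2, and let i, j be 0-based indices with j ≠ i and (i + j + 1 : ℕ) ≠ n. Then the (j,i) minor of X vanishes: the determinant of the (n−1)×(n−1) submatrix of X obtained by deleting row j and column i is zero. -/
import Mathlib


/-- An `n × n` complex matrix is a *cross matrix* if its nonzero entries lie
only on the main diagonal and the anti-diagonal (0-based indices). -/
def IsCrossMatrix {n : ℕ} (X : Matrix (Fin n) (Fin n) ℂ) : Prop :=
  ∀ i j : Fin n, j ≠ i → (i : ℕ) + (j : ℕ) + 1 ≠ n → X i j = 0

/-- For a cross matrix of order `n = m + 1 ≥ 2`, the `(j, i)` minor (the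
determinant of the submatrix obtained by deleting row `j` and column `i`)
vanishes whenever `j ≠ i` and `i + j + 1 ≠ n`. -/
theorem crossMatrix_minor_eq_zero (m : ℕ) (hm : 1 ≤ m)
    (X : Matrix (Fin (m + 1)) (Fin (m + 1)) ℂ) (hX : IsCrossMatrix X)
    (i j : Fin (m + 1)) (hij : j ≠ i) (hanti : (i : ℕ) + (j : ℕ) + 1 ≠ m + 1) :
    (X.submatrix j.succAbove i.succAbove).det = 0 := by
  rw [Matrix.det_apply]
  apply Finset.sum_eq_zero
  intro σ _
  have hz : (∏ k, (X.submatrix j.succAbove i.succAbove) (σ k) k) = 0 := by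
    by_contra hprod
    have hfac : ∀ k, X (j.succAbove (σ k)) (i.succAbove k) ≠ 0 := by
      intro k hk
      exact hprod (Finset.prod_eq_zero (Finset.mem_univ k) hk)
    have hcross : ∀ k : Fin m, i.succAbove k = j.succAbove (σ k) ∨
        ((j.succAbove (σ k) : ℕ) + (i.succAbove k : ℕ) + 1 = m + 1) := by
      intro k
      by_contra h
      push_neg at h
      exact hfac k (hX _ _ h.1 h.2)
    obtain ⟨k0, hk0⟩ := Fin.exists_succAbove_eq hij
    set r0 := j.succAbove (σ k0) with hr0
    have hr0j : r0 ≠ j := j.succAbove_ne (σ k0)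
    have h0 := hcross k0
    rw [hk0] at h0
    have hval : (r0 : ℕ) + (j : ℕ) + 1 = m + 1 := h0.resolve_left (fun h => hr0j h.symm)
    have hr0i : r0 ≠ i := by
      intro h
      apply hanti
      rw [← h]
      omega
    obtain ⟨k1, hk1⟩ := Fin.exists_succAbove_eq hr0i
    have h1 := hcross k1
    rw [hk1] at h1
    rcases h1 with h1 | h1
    · have hσ : σ k1 = σ k0 := Fin.succAbove_right_injective h1.symm
      have : k1 = k0 := σ.injective hσ
      rw [this, hk0] at hk1
      exact hr0j hk1.symm
    · have : (j.succAbove (σ k1) : ℕ) = (j : ℕ) := by omega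
      exact j.succAbove_ne (σ k1) (Fin.ext this)
  rw [hz, smul_zero]
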